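/- arXiv:math/0410364 — 2 statements merged into one kernel-verified Lean document; each statement's English description precedes it below -/
import Mathlib

section
/- The map τ ↦ τ⁻¹ (inverse permutation) gives a Hopf algebra isomorphism from (MPR, m, μ) to (MPR, m', μ'), induced from the top-bottom swap (ρ,σ) ↦ (σ,ρ) of dWHA under the embedding of permutations as substitutions. -/
open Finsupp TensorProduct

/-- All shuffles of two words (with multiplicity). -/
def shuffles : List ℕ → List ℕ → List (List ℕ)
  | [], t => [t]
  | s, [] => [s]
  | a :: s, b :: t =>
      ((shuffles s (b :: t)).map (a :: ·)) ++ ((shuffles (a :: s) t).map (b :: ·))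

/-- Standardization of an injective word: each letter is replaced by its rank. -/
def stdz (w : List ℕ) : List ℕ := w.map (fun a => w.countP (fun b => b ≤ a))

/-- `w` is a permutation word: a rearrangement of `[1,…,n]` where `n` is its length. -/
def IsPermWord (w : List ℕ) : Prop := w.Perm (List.range' 1 w.length)

/-- The underlying free abelian group of `MPR` (and of related word Hopf algebras). -/
abbrev MPR : Type := List ℕ →₀ ℤ

/-- First multiplication of `MPR`: shifted shuffle. -/
noncomputable def mulMPR (σ τ : List ℕ) : MPR :=
  ((shuffles σ (τ.map (· + σ.length))).map (fun γ => Finsupp.single γ (1 : ℤ))).sum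

/-- First comultiplication of `MPR`: standardized cuts. -/
noncomputable def comulMPR (σ : List ℕ) : MPR ⊗[ℤ] MPR :=
  ((List.range (σ.length + 1)).map (fun i =>
    Finsupp.single (stdz (σ.take i)) (1 : ℤ) ⊗ₜ[ℤ]
      Finsupp.single (stdz (σ.drop i)) (1 : ℤ))).sum

/-- Second multiplication of `MPR`: `m'(σ⊗τ) = Σ u*v` over all pairs `(u,v)` with
`st(u) = σ`, `st(v) = τ` and `supp(u) ∪ supp(v) = {1,…,m+n}`. -/
noncomputable def mulMPR' (σ τ : List ℕ) : MPR :=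
  (((List.range' 1 (σ.length + τ.length)).permutations.filter
      (fun w => stdz (w.take σ.length) = σ ∧ stdz (w.drop σ.length) = τ)).map
    (fun w => Finsupp.single w (1 : ℤ))).sum

/-- Second comultiplication of `MPR`: `μ'(τ) = Σᵢ τ_{{1..i}} ⊗ st(τ_{{i+1..n}})`. -/
noncomputable def comulMPR' (τ : List ℕ) : MPR ⊗[ℤ] MPR :=
  ((List.range (τ.length + 1)).map (fun i =>
    Finsupp.single (τ.filter (fun a => a ≤ i)) (1 : ℤ) ⊗ₜ[ℤ]
      Finsupp.single (stdz (τ.filter (fun a => i < a))) (1 : ℤ))).sum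

/-- The inverse of a permutation word. -/
def invWord (w : List ℕ) : List ℕ := (List.range' 1 w.length).map (fun i => w.idxOf i + 1)

/-- The linear extension of `τ ↦ τ⁻¹` to the free abelian group `MPR`. -/
noncomputable def invL : MPR →ₗ[ℤ] MPR := Finsupp.lmapDomain ℤ ℤ invWord

section Aux

open List

lemma pw_nodup {w : List ℕ} (h : IsPermWord w) : w.Nodup :=
  h.nodup_iff.2 (nodup_range')

lemma pw_mem {w : List ℕ} (h : IsPermWord w) {k : ℕ} :
    k ∈ w ↔ 1 ≤ k ∧ k < 1 + w.length := by
  rw [h.mem_iff, mem_range'_1]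

lemma isPermWord_of_perm {w : List ℕ} {N : ℕ} (h : w ~ List.range' 1 N) : IsPermWord w := by
  have hl : w.length = N := by simpa using h.length_eq
  rwa [IsPermWord, hl]

@[simp] lemma length_invWord (w : List ℕ) : (invWord w).length = w.length := by
  simp [invWord]

lemma invWord_getElem (w : List ℕ) {j : ℕ} (hj : j < w.length) :
    (invWord w)[j]'(by simpa using hj) = w.idxOf (1 + j) + 1 := by
  simp [invWord]

lemma nodup_invWord {w : List ℕ} (h : IsPermWord w) : (invWord w).Nodup := by
  apply Nodup.map_on ?_ (nodup_range')
  intro x hx y hy hxy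
  have hxw : x ∈ w := (pw_mem h).2 (by simpa [mem_range'_1] using hx)
  have hyw : y ∈ w := (pw_mem h).2 (by simpa [mem_range'_1] using hy)
  have hxy' : w.idxOf x = w.idxOf y := by omega
  have h1 : w[w.idxOf x]'(idxOf_lt_length_iff.2 hxw) = x := getElem_idxOf _
  have h2 : w[w.idxOf y]'(idxOf_lt_length_iff.2 hyw) = y := getElem_idxOf _
  rw [← h1, ← h2]
  congr 1

lemma isPermWord_invWord {w : List ℕ} (h : IsPermWord w) : IsPermWord (invWord w) := by
  rw [IsPermWord, length_invWord]
  apply Subperm.perm_of_length_le ((nodup_invWord h).subperm ?_) (by simp)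
  intro x hx
  obtain ⟨i, hi, rfl⟩ := mem_map.1 hx
  have hiw : i ∈ w := (pw_mem h).2 (by simpa [mem_range'_1] using hi)
  have := idxOf_lt_length_iff.2 hiw
  rw [mem_range'_1]
  omega

lemma invWord_invWord {w : List ℕ} (h : IsPermWord w) : invWord (invWord w) = w := by
  have hnd := pw_nodup h
  have hnd' := nodup_invWord h
  apply ext_getElem (by simp)
  intro j hj hj'
  have hj'' : j < w.length := by simpa using hj'
  set k := w[j]'hj'' with hk
  have hkw : k ∈ w := getElem_mem _
  have hk1 : 1 ≤ k ∧ k < 1 + w.length := (pw_mem h).1 hkw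
  have hidx : w.idxOf k = j := Nodup.idxOf_getElem hnd j hj''
  have hkm : k - 1 < (invWord w).length := by simp; omega
  have hval : (invWord w)[k-1]'hkm = j + 1 := by
    rw [invWord_getElem w (by omega : k - 1 < w.length)]
    rw [show 1 + (k-1) = k by omega, hidx]
  have hidx2 : (invWord w).idxOf (j+1) = k - 1 := by
    rw [← hval]; exact Nodup.idxOf_getElem hnd' _ _
  rw [invWord_getElem (invWord w) (by simpa using hj''), show 1 + j = j + 1 by omega, hidx2]
  omega

lemma invWord_eq_iff {x y : List ℕ} (hx : IsPermWord x) (hy : IsPermWord y) :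
    invWord x = y ↔ x = invWord y := by
  constructor
  · rintro rfl; exact (invWord_invWord hx).symm
  · rintro rfl; exact invWord_invWord hy

lemma rk_lt {u : List ℕ} (hu : u.Nodup) {a b : ℕ} (hb : b ∈ u) (hab : a < b) :
    u.countP (fun x => x ≤ a) < u.countP (fun x => x ≤ b) := by
  rw [countP_eq_length_filter, countP_eq_length_filter]
  have heq : (u.filter (fun x => decide (x ≤ b))).filter (fun x => decide (x ≤ a))
      = u.filter (fun x => decide (x ≤ a)) := by
    rw [filter_filter]
    apply filter_congr
    intro x _
    by_cases hxa : x ≤ a <;> simp [hxa] <;> omega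
  have hsub : u.filter (fun x => decide (x ≤ a)) <+ u.filter (fun x => decide (x ≤ b)) := by
    rw [← heq]; exact filter_sublist
  apply lt_of_le_of_ne hsub.length_le
  intro hlen
  have heq2 := hsub.eq_of_length hlen
  have hbmem : b ∈ u.filter (fun x => decide (x ≤ b)) := mem_filter.2 ⟨hb, by simp⟩
  rw [← heq2] at hbmem
  have := (mem_filter.1 hbmem).2
  simp at this; omega

lemma rk_injOn {u : List ℕ} (hu : u.Nodup) :
    ∀ x ∈ u, ∀ y ∈ u, u.countP (fun b => b ≤ x) = u.countP (fun b => b ≤ y) → x = y := by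
  intro x hx y hy hxy
  rcases lt_trichotomy x y with h | h | h
  · have := rk_lt hu hy h; omega
  · exact h
  · have := rk_lt hu hx h; omega

lemma stdz_length (u : List ℕ) : (stdz u).length = u.length := by simp [stdz]

lemma isPermWord_stdz {u : List ℕ} (hu : u.Nodup) : IsPermWord (stdz u) := by
  rw [IsPermWord, stdz_length]
  have hnd : (stdz u).Nodup := Nodup.map_on (rk_injOn hu) hu
  apply Subperm.perm_of_length_le (hnd.subperm ?_) (by simp [stdz_length])
  intro x hx
  obtain ⟨a, ha, rfl⟩ := mem_map.1 hx
  rw [mem_range'_1]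
  constructor
  · exact countP_pos_iff.2 ⟨a, ha, by simp⟩
  · have := countP_le_length (p := fun b => decide (b ≤ a)) (l := u); omega

lemma stdz_map_add (c : ℕ) (v : List ℕ) : stdz (v.map (· + c)) = stdz v := by
  simp only [stdz, map_map, countP_map]
  apply map_congr_left
  intro a _
  apply List.countP_congr
  intro x _
  simp

lemma countP_le_range' (n : ℕ) : ∀ a : ℕ, a ≤ n →
    (List.range' 1 n).countP (fun b => b ≤ a) = a := by
  induction n with
  | zero => intro a ha; interval_cases a; simp
  | succ n ih =>
    intro a ha
    rw [range'_1_concat, countP_append]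
    rcases Nat.lt_or_ge a (n+1) with h | h
    · rw [ih a (by omega)]
      simp; omega
    · have ha' : a = n + 1 := by omega
      subst ha'
      have : (List.range' 1 n).countP (fun b => b ≤ n + 1) = n := by
        rw [countP_eq_length.2 ?_]
        · simp
        · intro x hx
          rw [mem_range'_1] at hx
          simp; omega
      rw [this]
      have h1 : (1:ℕ)+n ≤ n+1 := by omega
      simp [countP_cons, h1]

lemma stdz_permWord {w : List ℕ} (h : IsPermWord w) : stdz w = w := by
  rw [stdz]
  have : ∀ a ∈ w, w.countP (fun b => b ≤ a) = a := by
    intro a ha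
    rw [h.countP_eq]
    exact countP_le_range' _ a (by have := (pw_mem h).1 ha; omega)
  rw [map_congr_left this, map_id']

lemma indexOf_take' {w : List ℕ} {m k : ℕ} (hk : k ∈ w.take m) :
    w.idxOf k = (w.take m).idxOf k := by
  conv_lhs => rw [← take_append_drop m w]
  exact idxOf_append_of_mem hk

lemma indexOf_drop' {w : List ℕ} {m k : ℕ} (hw : w.Nodup) (hm : m ≤ w.length)
    (hk : k ∈ w.drop m) : w.idxOf k = m + (w.drop m).idxOf k := by
  have hnd : (w.take m ++ w.drop m).Nodup := by rw [take_append_drop]; exact hw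
  have hdisj := (nodup_append.1 hnd).2.2
  have hknt : k ∉ w.take m := fun hh => hdisj k hh k hk rfl
  conv_lhs => rw [← take_append_drop m w]
  rw [idxOf_append_of_notMem hknt, length_take]
  omega

lemma mem_take_iff' {w : List ℕ} (hw : w.Nodup) {m k : ℕ} (hk : k ∈ w) :
    k ∈ w.take m ↔ w.idxOf k < m := by
  constructor
  · intro h
    rw [indexOf_take' h]
    have h1 := idxOf_lt_length_iff.2 h
    rw [length_take] at h1
    omega
  · intro h
    have hlt : w.idxOf k < w.length := idxOf_lt_length_iff.2 hk
    have hg : w[w.idxOf k]'hlt = k := getElem_idxOf hlt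
    have hlt2 : w.idxOf k < (w.take m).length := by rw [length_take]; omega
    have : (w.take m)[w.idxOf k]'hlt2 = k := by rw [getElem_take]; exact hg
    rw [← this]; exact getElem_mem _

lemma mem_drop_iff' {w : List ℕ} (hw : w.Nodup) {m k : ℕ} (hk : k ∈ w) :
    k ∈ w.drop m ↔ m ≤ w.idxOf k := by
  have hnd : (w.take m ++ w.drop m).Nodup := by rw [take_append_drop]; exact hw
  have hdisj := (nodup_append.1 hnd).2.2
  have hsplit : k ∈ w.take m ∨ k ∈ w.drop m := by
    rw [← mem_append, take_append_drop]; exact hk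
  constructor
  · intro h
    by_contra hc
    exact hdisj k ((mem_take_iff' hw hk).2 (by omega)) k h rfl
  · intro h
    rcases hsplit with h1 | h1
    · exact absurd ((mem_take_iff' hw hk).1 h1) (by omega)
    · exact h1

lemma indexOf_map' {f : ℕ → ℕ} : ∀ {u : List ℕ},
    (∀ x ∈ u, ∀ y ∈ u, f x = f y → x = y) → ∀ {k}, k ∈ u →
    (u.map f).idxOf (f k) = u.idxOf k := by
  intro u
  induction u with
  | nil => simp
  | cons a u ih =>
    intro hf k hk
    by_cases hka : k = a
    · subst hka; simp [idxOf_cons_self]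
    · have hne : f a ≠ f k := fun h => hka (hf k hk a (mem_cons_self) h.symm)
      have hk' : k ∈ u := (mem_cons.1 hk).resolve_left hka
      rw [map_cons, idxOf_cons_ne _ hne, idxOf_cons_ne _ (fun h => hka h.symm)]
      exact congrArg Nat.succ (ih (fun x hx y hy => hf x (mem_cons_of_mem _ hx) y (mem_cons_of_mem _ hy)) hk')

lemma filter_mem_of_sublist : ∀ {l s : List ℕ}, l.Nodup → s <+ l →
    l.filter (fun x => decide (x ∈ s)) = s := by
  intro l
  induction l with
  | nil => intro s _ hs; rw [sublist_nil.1 hs]; simp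
  | cons c l ih =>
    intro s hnd hs
    rcases sublist_cons_iff.1 hs with h | ⟨r, rfl, hr⟩
    · have hcl : c ∉ l := (nodup_cons.1 hnd).1
      have hcs : c ∉ s := fun hcs => hcl (h.subset hcs)
      rw [filter_cons]
      simp only [hcs, decide_false, Bool.false_eq_true, if_false]
      exact ih (nodup_cons.1 hnd).2 h
    · have hcl : c ∉ l := (nodup_cons.1 hnd).1
      rw [filter_cons]
      simp only [mem_cons, true_or, decide_true, if_true]
      congr 1
      rw [filter_congr (q := fun x => decide (x ∈ r)) ?_]
      · exact ih (nodup_cons.1 hnd).2 hr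
      · intro x hx
        have : x ≠ c := fun h => hcl (h ▸ hx)
        simp [this]

lemma map_rk_eq {n : ℕ} {u : List ℕ} (hu : u.Nodup) (hsub : ∀ x ∈ u, x ∈ List.range' 1 n) :
    ((List.range' 1 n).filter (fun k => decide (k ∈ u))).map
      (fun a => u.countP (fun b => b ≤ a)) = List.range' 1 u.length := by
  set su := (List.range' 1 n).filter (fun k => decide (k ∈ u)) with hsu
  have hperm : su ~ u := by
    rw [perm_ext_iff_of_nodup ((nodup_range').filter _) hu]
    intro a
    simp only [hsu, mem_filter, decide_eq_true_eq]
    exact ⟨fun h => h.2, fun h => ⟨hsub a h, h⟩⟩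
  have hperm2 : su.map (fun a => u.countP (fun b => b ≤ a)) ~ List.range' 1 u.length := by
    refine (hperm.map _).trans ?_
    have := isPermWord_stdz hu
    rwa [IsPermWord, stdz_length] at this
  have hs1 : su.Pairwise (· < ·) := List.Pairwise.sublist (filter_sublist) (pairwise_lt_range')
  have hs2 : su.Pairwise (fun a b => u.countP (fun x => x ≤ a) < u.countP (fun x => x ≤ b)) := by
    apply hs1.imp_of_mem
    intro a b ha hb hab
    have hbu : b ∈ u := hperm.subset hb
    exact rk_lt hu hbu hab
  haveI hanti : IsAntisymm ℕ (fun x1 x2 => x1 ≤ x2) := ⟨fun a b h1 h2 => Nat.le_antisymm h1 h2⟩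
  exact hperm2.eq_of_sortedLE (pairwise_map.2 hs2).sortedLT.sortedLE
    (pairwise_lt_range').sortedLT.sortedLE

lemma L1 {w : List ℕ} (hw : IsPermWord w) {m : ℕ} (hm : m ≤ w.length) :
    (invWord w).filter (fun a => a ≤ m) = invWord (stdz (w.take m)) := by
  have hwnd := pw_nodup hw
  set n := w.length with hn
  set u := w.take m with hu
  have hulen : u.length = m := by rw [hu, length_take]; omega
  have hund : u.Nodup := (take_sublist m w).nodup hwnd
  have husub : ∀ x ∈ u, x ∈ List.range' 1 n := fun x hx => hw.subset (take_subset m w hx)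
  have hLHS : (invWord w).filter (fun a => a ≤ m)
      = ((List.range' 1 n).filter (fun k => decide (k ∈ u))).map (fun k => w.idxOf k + 1) := by
    rw [invWord, filter_map]
    congr 1
    apply filter_congr
    intro k hk
    have hkw : k ∈ w := (pw_mem hw).2 (by simpa [mem_range'_1] using hk)
    simp only [Function.comp, decide_eq_decide]
    rw [hu, mem_take_iff' hwnd hkw]
    omega
  have hRHS : invWord (stdz u) = (List.range' 1 m).map (fun i => (stdz u).idxOf i + 1) := by
    rw [invWord, stdz_length, hulen]
  rw [hLHS, hRHS, ← hulen, ← map_rk_eq hund husub, map_map]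
  apply map_congr_left
  intro k hk
  have hku : k ∈ u := by simpa using (mem_filter.1 hk).2
  have h1 : (stdz u).idxOf (u.countP (fun b => b ≤ k)) = u.idxOf k :=
    indexOf_map' (rk_injOn hund) hku
  have h2 : w.idxOf k = u.idxOf k := indexOf_take' (hu ▸ hku)
  simp only [Function.comp]
  rw [h1, h2]

lemma L2 {w : List ℕ} (hw : IsPermWord w) {m : ℕ} (hm : m ≤ w.length) :
    (invWord w).filter (fun a => m < a) = (invWord (stdz (w.drop m))).map (fun a => a + m) := by
  have hwnd := pw_nodup hw
  set n := w.length with hn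
  set v := w.drop m with hv
  have hvlen : v.length = n - m := by rw [hv, length_drop]
  have hvnd : v.Nodup := (drop_sublist m w).nodup hwnd
  have hvsub : ∀ x ∈ v, x ∈ List.range' 1 n := fun x hx => hw.subset (drop_subset m w hx)
  have hLHS : (invWord w).filter (fun a => m < a)
      = ((List.range' 1 n).filter (fun k => decide (k ∈ v))).map (fun k => w.idxOf k + 1) := by
    rw [invWord, filter_map]
    congr 1
    apply filter_congr
    intro k hk
    have hkw : k ∈ w := (pw_mem hw).2 (by simpa [mem_range'_1] using hk)
    simp only [Function.comp, decide_eq_decide]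
    rw [hv, mem_drop_iff' hwnd hkw]
    omega
  have hRHS : invWord (stdz v) = (List.range' 1 (n-m)).map (fun i => (stdz v).idxOf i + 1) := by
    rw [invWord, stdz_length, hvlen]
  rw [hLHS, hRHS, map_map, ← hvlen, ← map_rk_eq hvnd hvsub, map_map]
  apply map_congr_left
  intro k hk
  have hkv : k ∈ v := by simpa using (mem_filter.1 hk).2
  have h1 : (stdz v).idxOf (v.countP (fun b => b ≤ k)) = v.idxOf k :=
    indexOf_map' (rk_injOn hvnd) hkv
  have h2 : w.idxOf k = m + v.idxOf k := indexOf_drop' hwnd (by omega) (hv ▸ hkv)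
  simp only [Function.comp]
  rw [h1, h2]
  omega

lemma mem_shuffles (s : List ℕ) : ∀ (t γ : List ℕ), (s ++ t).Nodup →
    (γ ∈ shuffles s t ↔ (γ ~ s ++ t ∧ s <+ γ ∧ t <+ γ)) := by
  induction s with
  | nil =>
    intro t γ _
    simp only [shuffles, mem_singleton, nil_append, nil_sublist, true_and]
    constructor
    · rintro rfl; exact ⟨Perm.refl _, Sublist.refl _⟩
    · rintro ⟨hp, ht⟩
      exact (ht.eq_of_length hp.length_eq.symm).symm
  | cons a s ihs =>
    intro t
    induction t with
    | nil =>
      intro γ _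
      simp only [shuffles, mem_singleton, append_nil]
      constructor
      · rintro rfl; exact ⟨Perm.refl _, Sublist.refl _, nil_sublist _⟩
      · rintro ⟨hp, hs, _⟩
        exact (hs.eq_of_length hp.length_eq.symm).symm
    | cons b t iht =>
      intro γ h
      have hnd1 : (s ++ b :: t).Nodup := (nodup_cons.1 (by simpa using h)).2
      have hperm_mid : (a :: s) ++ b :: t ~ b :: ((a :: s) ++ t) := perm_middle
      have hnd2 : ((a :: s) ++ t).Nodup := (nodup_cons.1 (hperm_mid.nodup_iff.1 h)).2
      have hab : a ≠ b := by
        have hd := (nodup_append.1 h).2.2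
        intro hab
        exact hd a mem_cons_self b mem_cons_self hab
      rw [shuffles]
      simp only [mem_append, mem_map]
      constructor
      · rintro (⟨γ', hγ', rfl⟩ | ⟨γ', hγ', rfl⟩)
        · obtain ⟨hp, hs1, ht1⟩ := (ihs (b :: t) γ' hnd1).1 hγ'
          exact ⟨hp.cons a, cons_sublist_cons.2 hs1, ht1.trans (sublist_cons_self _ _)⟩
        · obtain ⟨hp, hs1, ht1⟩ := (iht γ' hnd2).1 hγ'
          exact ⟨(hp.cons b).trans hperm_mid.symm, hs1.trans (sublist_cons_self _ _),
            cons_sublist_cons.2 ht1⟩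
      · rintro ⟨hp, hss, hts⟩
        obtain ⟨c, γ', rfl⟩ : ∃ c γ', γ = c :: γ' := by
          cases γ with
          | nil => exact absurd hp.length_eq (by simp)
          | cons c γ' => exact ⟨c, γ', rfl⟩
        have hγnd : (c :: γ').Nodup := hp.nodup_iff.2 h
        have hcγ' : c ∉ γ' := (nodup_cons.1 hγnd).1
        have hc : c ∈ (a :: s) ++ b :: t := hp.subset (mem_cons_self)
        rcases mem_append.1 hc with hcs | hct
        · rcases sublist_cons_iff.1 hss with h1 | ⟨r, heq, hr⟩
          · exact absurd (h1.subset hcs) hcγ'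
          · injection heq with h1 h2
            subst h1; subst h2
            have ht' : b :: t <+ γ' := by
              rcases sublist_cons_iff.1 hts with h2 | ⟨r', heq', _⟩
              · exact h2
              · injection heq' with h3 _
                exact absurd h3.symm hab
            have hp' : γ' ~ s ++ (b :: t) := (perm_cons a).1 hp
            exact Or.inl ⟨γ', (ihs (b :: t) γ' hnd1).2 ⟨hp', hr, ht'⟩, rfl⟩
        · rcases sublist_cons_iff.1 hts with h1 | ⟨r, heq, hr⟩
          · exact absurd (h1.subset hct) hcγ'
          · injection heq with h1 h2
            subst h1; subst h2
            have hs' : (a :: s) <+ γ' := by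
              rcases sublist_cons_iff.1 hss with h2 | ⟨r', heq', _⟩
              · exact h2
              · injection heq' with h3 _
                exact absurd h3 hab
            have hp' : γ' ~ (a :: s) ++ t := (perm_cons b).1 (hp.trans hperm_mid)
            exact Or.inr ⟨γ', (iht γ' hnd2).2 ⟨hp', hs', hr⟩, rfl⟩

lemma nodup_shuffles (s : List ℕ) : ∀ t, (s ++ t).Nodup → (shuffles s t).Nodup := by
  induction s with
  | nil => intro t _; simp [shuffles]
  | cons a s ihs =>
    intro t
    induction t with
    | nil => intro _; simp [shuffles]
    | cons b t iht =>
      intro h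
      have hnd1 : (s ++ b :: t).Nodup := (nodup_cons.1 (by simpa using h)).2
      have hperm_mid : (a :: s) ++ b :: t ~ b :: ((a :: s) ++ t) := perm_middle
      have hnd2 : ((a :: s) ++ t).Nodup := (nodup_cons.1 (hperm_mid.nodup_iff.1 h)).2
      have hab : a ≠ b := by
        have hd := (nodup_append.1 h).2.2
        intro hab
        exact hd a mem_cons_self b mem_cons_self hab
      rw [shuffles]
      apply Nodup.append
      · exact (ihs (b :: t) hnd1).map (fun x y hxy => by simpa using congrArg List.tail hxy)
      · exact (iht hnd2).map (fun x y hxy => by simpa using congrArg List.tail hxy)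
      · intro γ hγ1 hγ2
        obtain ⟨x, _, rfl⟩ := mem_map.1 hγ1
        obtain ⟨y, _, heq⟩ := mem_map.1 hγ2
        injection heq with h1 _
        exact hab h1.symm

lemma append_shift_perm {σ τ : List ℕ} (hσ : IsPermWord σ) (hτ : IsPermWord τ) :
    σ ++ τ.map (· + σ.length) ~ List.range' 1 (σ.length + τ.length) := by
  set m := σ.length with hm
  set n := τ.length with hn
  have hτ'p : τ.map (· + m) ~ List.range' (m+1) n := by
    have h1 : (List.range' 1 n).map (fun x => m + x) = List.range' (m+1) n :=
      map_add_range' (a := m) 1 n 1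
    have h2 : (List.range' 1 n).map (fun x => x + m) = List.range' (m+1) n := by
      rw [← h1]; apply map_congr_left; intro x _; omega
    exact (hτ.map _).trans (h2 ▸ Perm.refl _)
  have heq : List.range' 1 m ++ List.range' (m+1) n = List.range' 1 (m+n) := by
    have h3 := range'_append (s := 1) (m := m) (n := n) (step := 1)
    simp only [one_mul] at h3
    rw [show m + 1 = 1 + m by omega, h3]
  exact (hσ.append hτ'p).trans (heq ▸ Perm.refl _)

lemma shuffle_iff {σ τ : List ℕ} (hσ : IsPermWord σ) (hτ : IsPermWord τ) {w : List ℕ}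
    (hw : w ~ List.range' 1 (σ.length + τ.length)) :
    invWord w ∈ shuffles σ (τ.map (· + σ.length)) ↔
      (stdz (w.take σ.length) = invWord σ ∧ stdz (w.drop σ.length) = invWord τ) := by
  set m := σ.length with hm
  set n := τ.length with hn
  set τ' := τ.map (· + m) with hτ'
  have hcat : σ ++ τ' ~ List.range' 1 (m+n) := append_shift_perm hσ hτ
  have hnd : (σ ++ τ').Nodup := hcat.nodup_iff.2 (nodup_range')
  have hwp : IsPermWord w := isPermWord_of_perm hw
  have hwlen : w.length = m + n := by simpa using hw.length_eq
  have hwnd : w.Nodup := pw_nodup hwp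
  have hiw : IsPermWord (invWord w) := isPermWord_invWord hwp
  have hiwnd : (invWord w).Nodup := pw_nodup hiw
  have hm_le : m ≤ w.length := by omega
  have hiwsub : ∀ x ∈ invWord w, 1 ≤ x ∧ x < 1 + (m + n) := by
    intro x hx
    have := (pw_mem hiw).1 hx
    rwa [length_invWord, hwlen] at this
  have hτ'p : τ' ~ List.range' (m+1) n := by
    have h1 : (List.range' 1 n).map (fun x => m + x) = List.range' (m+1) n :=
      map_add_range' (a := m) 1 n 1
    have h2 : (List.range' 1 n).map (fun x => x + m) = List.range' (m+1) n := by
      rw [← h1]; apply map_congr_left; intro x _; omega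
    exact (hτ.map _).trans (h2 ▸ Perm.refl _)
  rw [mem_shuffles σ τ' (invWord w) hnd]
  have hpauto : invWord w ~ σ ++ τ' := by
    have h4 : invWord w ~ List.range' 1 (m+n) := by
      have := hiw; rwa [IsPermWord, length_invWord, hwlen] at this
    exact h4.trans hcat.symm
  have hA : (σ <+ invWord w) ↔ stdz (w.take m) = invWord σ := by
    have step1 : (σ <+ invWord w) ↔ (invWord w).filter (fun x => decide (x ∈ σ)) = σ := by
      constructor
      · exact fun hs => filter_mem_of_sublist hiwnd hs
      · intro hf; rw [← hf]; exact filter_sublist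
    have step2 : (invWord w).filter (fun x => decide (x ∈ σ))
        = (invWord w).filter (fun a => a ≤ m) := by
      apply filter_congr
      intro x hx
      have hx1 := hiwsub x hx
      simp only [decide_eq_decide]
      rw [pw_mem hσ, ← hm]
      omega
    rw [step1, step2, L1 hwp hm_le]
    exact invWord_eq_iff (isPermWord_stdz ((take_sublist m w).nodup hwnd)) hσ
  have hB : (τ' <+ invWord w) ↔ stdz (w.drop m) = invWord τ := by
    have step1 : (τ' <+ invWord w) ↔ (invWord w).filter (fun x => decide (x ∈ τ')) = τ' := by
      constructor
      · exact fun hs => filter_mem_of_sublist hiwnd hs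
      · intro hf; rw [← hf]; exact filter_sublist
    have step2 : (invWord w).filter (fun x => decide (x ∈ τ'))
        = (invWord w).filter (fun a => m < a) := by
      apply filter_congr
      intro x hx
      have hx1 := hiwsub x hx
      simp only [decide_eq_decide]
      rw [hτ'p.mem_iff, mem_range'_1]
      omega
    rw [step1, step2, L2 hwp hm_le]
    constructor
    · intro hmap
      have hinj : Function.Injective (fun a : ℕ => a + m) := add_left_injective m
      have h5 := map_injective_iff.2 hinj (hmap.trans hτ')
      exact (invWord_eq_iff (isPermWord_stdz ((drop_sublist m w).nodup hwnd)) hτ).1 h5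
    · intro heq
      rw [(invWord_eq_iff (isPermWord_stdz ((drop_sublist m w).nodup hwnd)) hτ).2 heq, hτ']
  constructor
  · rintro ⟨_, h1, h2⟩; exact ⟨hA.1 h1, hB.1 h2⟩
  · rintro ⟨h1, h2⟩; exact ⟨hpauto, hA.2 h1, hB.2 h2⟩

end Aux

open List in
/-- The map `τ ↦ τ⁻¹` is a Hopf algebra isomorphism `(MPR, m, μ) → (MPR, m', μ')`:
it is an involution on permutation words, intertwines the shifted-shuffle
multiplication with `m'`, and the standardized-cut comultiplication with `μ'`. -/
theorem stmt9 :
    (∀ σ : List ℕ, IsPermWord σ → invWord (invWord σ) = σ) ∧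
    (∀ σ τ : List ℕ, IsPermWord σ → IsPermWord τ →
      invL (mulMPR σ τ) = mulMPR' (invWord σ) (invWord τ)) ∧
    (∀ σ : List ℕ, IsPermWord σ →
      TensorProduct.map invL invL (comulMPR σ) = comulMPR' (invWord σ)) := by
  refine ⟨fun σ h => invWord_invWord h, ?_, ?_⟩
  · intro σ τ hσ hτ
    have hcat := append_shift_perm hσ hτ
    have hnd : (σ ++ τ.map (· + σ.length)).Nodup := hcat.nodup_iff.2 (List.nodup_range')
    have hL : invL (mulMPR σ τ) =
        (((shuffles σ (τ.map (· + σ.length))).map invWord).map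
          (fun w => Finsupp.single w (1:ℤ))).sum := by
      rw [mulMPR, map_list_sum, List.map_map, List.map_map]
      congr 1
      apply List.map_congr_left
      intro γ _
      simp [Function.comp, invL, Finsupp.lmapDomain_apply, Finsupp.mapDomain_single]
    have key : (shuffles σ (τ.map (· + σ.length))).map invWord ~
        (List.range' 1 (σ.length + τ.length)).permutations.filter
          (fun w => stdz (w.take σ.length) = invWord σ ∧ stdz (w.drop σ.length) = invWord τ) := by
      have nd1 : ((shuffles σ (τ.map (· + σ.length))).map invWord).Nodup := by
        apply List.Nodup.map_on ?_ (nodup_shuffles σ _ hnd)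
        intro x hx y hy hxy
        have hxp : IsPermWord x :=
          isPermWord_of_perm (((mem_shuffles _ _ x hnd).1 hx).1.trans hcat)
        have hyp : IsPermWord y :=
          isPermWord_of_perm (((mem_shuffles _ _ y hnd).1 hy).1.trans hcat)
        rw [← invWord_invWord hxp, hxy, invWord_invWord hyp]
      have nd2 : ((List.range' 1 (σ.length + τ.length)).permutations.filter
          (fun w => stdz (w.take σ.length) = invWord σ ∧ stdz (w.drop σ.length) = invWord τ)).Nodup :=
        (List.nodup_permutations _ (List.nodup_range')).filter _
      rw [List.perm_ext_iff_of_nodup nd1 nd2]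
      intro w
      simp only [List.mem_map, List.mem_filter, List.mem_permutations, decide_eq_true_eq]
      constructor
      · rintro ⟨γ, hγ, rfl⟩
        have hγp : IsPermWord γ :=
          isPermWord_of_perm (((mem_shuffles _ _ γ hnd).1 hγ).1.trans hcat)
        have hγlen : γ.length = σ.length + τ.length := by
          simpa using (((mem_shuffles _ _ γ hnd).1 hγ).1.trans hcat).length_eq
        have hwperm : invWord γ ~ List.range' 1 (σ.length + τ.length) := by
          have := isPermWord_invWord hγp
          rwa [IsPermWord, length_invWord, hγlen] at this
        exact ⟨hwperm, (shuffle_iff hσ hτ hwperm).1 (by rwa [invWord_invWord hγp])⟩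
      · rintro ⟨hwperm, hconds⟩
        have hwp : IsPermWord w := isPermWord_of_perm hwperm
        exact ⟨invWord w, (shuffle_iff hσ hτ hwperm).2 hconds, invWord_invWord hwp⟩
    rw [hL, mulMPR']
    simp only [length_invWord]
    exact List.Perm.sum_eq (key.map _)
  · intro σ hσ
    have hσnd := pw_nodup hσ
    rw [comulMPR, map_list_sum, List.map_map, comulMPR', length_invWord]
    congr 1
    apply List.map_congr_left
    intro i hi
    have hi' : i ≤ σ.length := by simp only [List.mem_range] at hi; omega
    simp only [Function.comp]
    rw [TensorProduct.map_tmul, L1 hσ hi', L2 hσ hi', stdz_map_add,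
      stdz_permWord (isPermWord_invWord (isPermWord_stdz ((List.drop_sublist i σ).nodup hσnd)))]
    simp [invL, Finsupp.lmapDomain_apply, Finsupp.mapDomain_single]
end

section
/- For descent sets D ⊂ {1,...,m−1} and D' ⊂ {1,...,n−1}, the product of the descent class sums ϑ_D and ϑ_{D'} in (MPR, m') equals ϑ_{D₁} + ϑ_{D₂}, where D₁ = D ∪ (m+D') and D₂ = D ∪ {m} ∪ (m+D') as subsets of {1,...,m+n−1}. -/
open Finsupp

/-- The descent set of a word `[s₁,…,sₘ]` : those `i ∈ {1,…,m−1}` with `sᵢ > s_{i+1}`. -/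
def descSet (w : List ℕ) : Finset ℕ :=
  (Finset.Ioo 0 w.length).filter (fun i => w.getD i 0 < w.getD (i - 1) 0)

/-- Bilinear extension of `m'` to `MPR`. -/
noncomputable def mulE (x y : MPR) : MPR :=
  x.sum fun σ c => y.sum fun τ d => (c * d) • mulMPR' σ τ

/-- The descent class sum `ϑ_D` : the sum of all permutation words of `{1,…,m}`
with descent set `D`. -/
noncomputable def theta (m : ℕ) (D : Finset ℕ) : MPR :=
  (((List.range' 1 m).permutations.filter (fun w => descSet w = D)).map
    (fun w => Finsupp.single w (1 : ℤ))).sum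

/-! ### Auxiliary lemmas on standardization and descent sets -/

lemma countP_le_eq_card (u : List ℕ) (hu : u.Nodup) (a : ℕ) :
    u.countP (fun b => b ≤ a) = (u.toFinset.filter (· ≤ a)).card := by
  rw [List.countP_eq_length_filter]
  rw [← List.toFinset_card_of_nodup (hu.filter _), List.toFinset_filter]
  congr 1; simp

lemma rank_lt (u : List ℕ) (hu : u.Nodup) {a b : ℕ} (hb : b ∈ u) (hab : a < b) :
    u.countP (fun c => c ≤ a) < u.countP (fun c => c ≤ b) := by
  rw [countP_le_eq_card u hu, countP_le_eq_card u hu]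
  apply Finset.card_lt_card
  constructor
  · intro c hc
    simp only [Finset.mem_filter] at hc ⊢
    exact ⟨hc.1, le_trans hc.2 hab.le⟩
  · intro hsub
    have h1 : b ∈ u.toFinset.filter (· ≤ b) := by
      simp [List.mem_toFinset.mpr hb]
    have h2 := hsub h1
    simp at h2
    omega

lemma rank_lt_iff (u : List ℕ) (hu : u.Nodup) {a b : ℕ} (ha : a ∈ u) (hb : b ∈ u)
    (hne : a ≠ b) : a < b ↔ u.countP (fun c => c ≤ a) < u.countP (fun c => c ≤ b) := by
  constructor
  · exact fun h => rank_lt u hu hb h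
  · intro h
    rcases lt_trichotomy a b with h' | h' | h'
    · exact h'
    · exact absurd h' hne
    · exact absurd (rank_lt u hu ha h') (by omega)

lemma mem_descSet {w : List ℕ} {i : ℕ} :
    i ∈ descSet w ↔ 0 < i ∧ i < w.length ∧ w.getD i 0 < w.getD (i - 1) 0 := by
  simp [descSet, Finset.mem_filter, Finset.mem_Ioo, and_assoc]

lemma getD_stdz (u : List ℕ) {i : ℕ} (hi : i < u.length) :
    (stdz u).getD i 0 = u.countP (fun b => b ≤ u.getD i 0) := by
  have h1 : (stdz u).getD i 0 = (stdz u)[i]'(by simpa [stdz] using hi) :=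
    List.getD_eq_getElem _ _ (by simpa [stdz] using hi)
  have h2 : u.getD i 0 = u[i]'hi := List.getD_eq_getElem _ _ hi
  rw [h1, h2]
  simp [stdz]

lemma descSet_stdz (u : List ℕ) (hu : u.Nodup) : descSet (stdz u) = descSet u := by
  ext i
  rw [mem_descSet, mem_descSet]
  have hlen : (stdz u).length = u.length := by simp [stdz]
  rw [hlen]
  refine and_congr_right fun h0 => and_congr_right fun hi => ?_
  have hi1 : i - 1 < u.length := by omega
  rw [getD_stdz u hi, getD_stdz u hi1]
  have hgi : u.getD i 0 = u[i]'hi := List.getD_eq_getElem _ _ hi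
  have hgi1 : u.getD (i-1) 0 = u[i-1]'hi1 := List.getD_eq_getElem _ _ hi1
  have hmem : u.getD i 0 ∈ u := by rw [hgi]; exact List.getElem_mem _
  have hmem1 : u.getD (i-1) 0 ∈ u := by rw [hgi1]; exact List.getElem_mem _
  have hne : u.getD i 0 ≠ u.getD (i-1) 0 := by
    rw [hgi, hgi1]
    intro h
    rw [hu.getElem_inj_iff] at h
    omega
  exact (rank_lt_iff u hu hmem hmem1 hne).symm

lemma stdz_perm (u : List ℕ) (hu : u.Nodup) : (stdz u).Perm (List.range' 1 u.length) := by
  have hlen : (stdz u).length = u.length := by simp [stdz]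
  have hnd : (stdz u).Nodup := by
    apply hu.map_on
    intro x hx y hy hxy
    by_contra hne
    rcases lt_trichotomy x y with h | h | h
    · exact absurd hxy (by have := rank_lt u hu hy h; omega)
    · exact hne h
    · exact absurd hxy (by have := rank_lt u hu hx h; omega)
  apply List.perm_of_nodup_nodup_toFinset_eq hnd (List.nodup_range')
  apply Finset.eq_of_subset_of_card_le
  · intro x hx
    rw [List.mem_toFinset] at hx ⊢
    simp only [stdz, List.mem_map] at hx
    obtain ⟨a, ha, rfl⟩ := hx
    rw [List.mem_range'_1]
    have h1 : 0 < u.countP (fun b => b ≤ a) := List.countP_pos_iff.mpr ⟨a, ha, by simp⟩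
    have h2 := u.countP_le_length (p := fun b => decide (b ≤ a))
    omega
  · rw [List.toFinset_card_of_nodup hnd, List.toFinset_card_of_nodup (List.nodup_range')]
    simp [hlen]

lemma getD_take (w : List ℕ) {i k : ℕ} (h : i < k) : (w.take k).getD i 0 = w.getD i 0 := by
  rw [List.getD_eq_getElem?_getD, List.getD_eq_getElem?_getD, List.getElem?_take, if_pos h]

lemma getD_drop (w : List ℕ) (i k : ℕ) : (w.drop k).getD i 0 = w.getD (k + i) 0 := by
  rw [List.getD_eq_getElem?_getD, List.getD_eq_getElem?_getD, List.getElem?_drop]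

lemma mem_desc_take {w : List ℕ} {m n i : ℕ} (hlen : w.length = m + n) :
    i ∈ descSet (w.take m) ↔ 0 < i ∧ i < m ∧ w.getD i 0 < w.getD (i - 1) 0 := by
  rw [mem_descSet]
  have hl : (w.take m).length = m := by rw [List.length_take]; omega
  rw [hl]
  refine and_congr_right fun h0 => and_congr_right fun hi => ?_
  rw [getD_take w hi, getD_take w (by omega)]

lemma mem_desc_drop {w : List ℕ} {m n j : ℕ} (hlen : w.length = m + n) :
    j ∈ descSet (w.drop m) ↔ 0 < j ∧ j < n ∧ w.getD (m + j) 0 < w.getD (m + j - 1) 0 := by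
  rw [mem_descSet]
  have hl : (w.drop m).length = n := by rw [List.length_drop]; omega
  rw [hl]
  refine and_congr_right fun h0 => and_congr_right fun hj => ?_
  rw [getD_drop, getD_drop]
  have : m + (j - 1) = m + j - 1 := by omega
  rw [this]

lemma mem_descSet_split {w : List ℕ} {m n : ℕ} (hlen : w.length = m + n)
    (hm : 0 < m) (hn : 0 < n) (i : ℕ) :
    i ∈ descSet w ↔ (i ∈ descSet (w.take m) ∨ (∃ j ∈ descSet (w.drop m), i = m + j)
      ∨ (i = m ∧ w.getD m 0 < w.getD (m - 1) 0)) := by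
  rw [mem_descSet, mem_desc_take hlen]
  constructor
  · rintro ⟨h0, hi, hP⟩
    rcases lt_trichotomy i m with h | h | h
    · exact Or.inl ⟨h0, h, hP⟩
    · exact Or.inr (Or.inr ⟨h, by rw [← h]; exact hP⟩)
    · refine Or.inr (Or.inl ⟨i - m, ?_, by omega⟩)
      rw [mem_desc_drop hlen]
      have h1 : m + (i - m) = i := by omega
      rw [h1]
      exact ⟨by omega, by omega, hP⟩
  · rintro (⟨h0, hi, hP⟩ | ⟨j, hj, rfl⟩ | ⟨rfl, hP⟩)
    · exact ⟨h0, by omega, hP⟩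
    · rw [mem_desc_drop hlen] at hj
      exact ⟨by omega, by omega, hj.2.2⟩
    · exact ⟨hm, by omega, hP⟩

lemma main_iff {w : List ℕ} {m n : ℕ} (hlen : w.length = m + n) (hm : 0 < m) (hn : 0 < n)
    {D D' : Finset ℕ} (hD : D ⊆ Finset.Ioo 0 m) (hD' : D' ⊆ Finset.Ioo 0 n) :
    (descSet (w.take m) = D ∧ descSet (w.drop m) = D') ↔
      (descSet w = D ∪ D'.image (m + ·) ∨
       descSet w = insert m (D ∪ D'.image (m + ·))) := by
  have hDlt : ∀ d ∈ D, 0 < d ∧ d < m := fun d hd => by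
    have := hD hd; rw [Finset.mem_Ioo] at this; exact this
  have hD'lt : ∀ d ∈ D', 0 < d ∧ d < n := fun d hd => by
    have := hD' hd; rw [Finset.mem_Ioo] at this; exact this
  constructor
  · rintro ⟨h1, h2⟩
    by_cases hdm : w.getD m 0 < w.getD (m - 1) 0
    · right
      ext i
      rw [mem_descSet_split hlen hm hn, h1, h2]
      simp only [Finset.mem_insert, Finset.mem_union, Finset.mem_image]
      constructor
      · rintro (h | ⟨j, hj, rfl⟩ | ⟨rfl, _⟩)
        · exact Or.inr (Or.inl h)
        · exact Or.inr (Or.inr ⟨j, hj, rfl⟩)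
        · exact Or.inl rfl
      · rintro (rfl | h | ⟨j, hj, rfl⟩)
        · exact Or.inr (Or.inr ⟨rfl, hdm⟩)
        · exact Or.inl h
        · exact Or.inr (Or.inl ⟨j, hj, rfl⟩)
    · left
      ext i
      rw [mem_descSet_split hlen hm hn, h1, h2]
      simp only [Finset.mem_union, Finset.mem_image]
      constructor
      · rintro (h | ⟨j, hj, rfl⟩ | ⟨rfl, hP⟩)
        · exact Or.inl h
        · exact Or.inr ⟨j, hj, rfl⟩
        · exact absurd hP hdm
      · rintro (h | ⟨j, hj, rfl⟩)
        · exact Or.inl h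
        · exact Or.inr (Or.inl ⟨j, hj, rfl⟩)
  · intro h
    have key1 : ∀ i, i ∈ descSet w → i ∈ D ∪ D'.image (m + ·) ∨ i = m := by
      intro i hi
      rcases h with h | h <;> rw [h] at hi
      · exact Or.inl hi
      · rcases Finset.mem_insert.mp hi with h' | h'
        · exact Or.inr h'
        · exact Or.inl h'
    have key2 : ∀ i, i ∈ D ∪ D'.image (m + ·) → i ∈ descSet w := by
      intro i hi
      rcases h with h | h <;> rw [h]
      · exact hi
      · exact Finset.mem_insert_of_mem hi
    constructor
    · ext i
      rw [mem_desc_take hlen]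
      constructor
      · rintro ⟨h0, hi, hP⟩
        have hiw : i ∈ descSet w := mem_descSet.mpr ⟨h0, by omega, hP⟩
        rcases key1 i hiw with hh | rfl
        · rw [Finset.mem_union] at hh
          rcases hh with hh | hh
          · exact hh
          · rw [Finset.mem_image] at hh
            obtain ⟨j, hj, rfl⟩ := hh
            have := hD'lt j hj; omega
        · omega
      · intro hi
        have h1 := hDlt i hi
        have hiw : i ∈ descSet w := key2 i (Finset.mem_union_left _ hi)
        rw [mem_descSet] at hiw
        exact ⟨h1.1, h1.2, hiw.2.2⟩
    · ext j
      rw [mem_desc_drop hlen]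
      constructor
      · rintro ⟨h0, hj, hP⟩
        have hiw : m + j ∈ descSet w := mem_descSet.mpr ⟨by omega, by omega, hP⟩
        rcases key1 (m+j) hiw with hh | heq
        · rw [Finset.mem_union] at hh
          rcases hh with hh | hh
          · have := hDlt _ hh; omega
          · rw [Finset.mem_image] at hh
            obtain ⟨j', hj', he⟩ := hh
            have : j' = j := by omega
            rwa [← this]
        · omega
      · intro hj
        have h1 := hD'lt j hj
        have hiw : m + j ∈ descSet w :=
          key2 (m+j) (Finset.mem_union_right _ (Finset.mem_image.mpr ⟨j, hj, rfl⟩))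
        rw [mem_descSet] at hiw
        exact ⟨h1.1, h1.2, hiw.2.2⟩

/-! ### Algebraic lemmas -/

lemma sum_list_single (L : List (List ℕ)) (g : List ℕ → ℤ → MPR)
    (h0 : ∀ a, g a 0 = 0) (hadd : ∀ a b₁ b₂, g a (b₁ + b₂) = g a b₁ + g a b₂) :
    ((L.map (fun a => Finsupp.single a (1 : ℤ))).sum).sum g = (L.map (fun a => g a 1)).sum := by
  induction L with
  | nil => simp [Finsupp.sum_zero_index]
  | cons a L ih =>
    rw [List.map_cons, List.sum_cons, Finsupp.sum_add_index' h0 hadd,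
      Finsupp.sum_single_index (h0 a), List.map_cons, List.sum_cons, ih]

lemma list_filter_sum {α M : Type*} [DecidableEq α] [AddCommMonoid M]
    (L : List α) (hL : L.Nodup) (q : α → Bool) (f : α → M) :
    ((L.filter q).map f).sum = ∑ a ∈ L.toFinset, if q a then f a else 0 := by
  rw [← List.sum_toFinset _ (hL.filter _), List.toFinset_filter, Finset.sum_filter]

lemma sum_rotate {M : Type*} [AddCommMonoid M] {α β γ : Type*} (s : Finset α) (t : Finset β)
    (u : Finset γ) (f : α → β → γ → M) :
    (∑ a ∈ s, ∑ b ∈ t, ∑ c ∈ u, f a b c) = ∑ c ∈ u, ∑ b ∈ t, ∑ a ∈ s, f a b c := by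
  rw [Finset.sum_comm]
  rw [show (∑ b ∈ t, ∑ a ∈ s, ∑ c ∈ u, f a b c) = ∑ b ∈ t, ∑ c ∈ u, ∑ a ∈ s, f a b c from
    Finset.sum_congr rfl (fun b _ => Finset.sum_comm)]
  rw [Finset.sum_comm]

lemma double_ite {M : Type*} [AddCommMonoid M] (F₁ F₂ : Finset (List ℕ)) (v₁ v₂ : List ℕ) (x : M) :
    (∑ σ ∈ F₁, ∑ τ ∈ F₂, if v₁ = σ ∧ v₂ = τ then x else 0)
      = if v₁ ∈ F₁ ∧ v₂ ∈ F₂ then x else 0 := by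
  by_cases h1 : v₁ ∈ F₁ <;> by_cases h2 : v₂ ∈ F₂ <;>
    simp [h1, h2, ite_and, Finset.sum_ite_eq]

/-- In `(MPR, m')`, `ϑ_D · ϑ_{D'} = ϑ_{D₁} + ϑ_{D₂}` where
`D₁ = D ∪ (m + D')` and `D₂ = D ∪ {m} ∪ (m + D')`. -/
theorem stmt11 (m n : ℕ) (hm : 0 < m) (hn : 0 < n) (D D' : Finset ℕ)
    (hD : D ⊆ Finset.Ioo 0 m) (hD' : D' ⊆ Finset.Ioo 0 n) :
    mulE (theta m D) (theta n D')
      = theta (m + n) (D ∪ D'.image (m + ·))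
        + theta (m + n) (insert m (D ∪ D'.image (m + ·))) := by
  classical
  set D₁ := D ∪ D'.image (m + ·) with hD₁
  set D₂ := insert m D₁ with hD₂
  have hD₁D₂ : D₁ ≠ D₂ := by
    intro h
    have hmD₂ : m ∈ D₂ := Finset.mem_insert_self _ _
    rw [← h] at hmD₂
    rcases Finset.mem_union.mp hmD₂ with h' | h'
    · have := hD h'; rw [Finset.mem_Ioo] at this; omega
    · obtain ⟨j, hj, he⟩ := Finset.mem_image.mp h'
      have := hD' hj; rw [Finset.mem_Ioo] at this; omega
  set L₁ := (List.range' 1 m).permutations.filter (fun w => descSet w = D) with hL₁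
  set L₂ := (List.range' 1 n).permutations.filter (fun w => descSet w = D') with hL₂
  set P := (List.range' 1 (m + n)).permutations with hP
  have hPnd : P.Nodup := List.nodup_permutations _ (List.nodup_range')
  have hL₁nd : L₁.Nodup := (List.nodup_permutations _ (List.nodup_range')).filter _
  have hL₂nd : L₂.Nodup := (List.nodup_permutations _ (List.nodup_range')).filter _
  -- Step 1: collapse mulE to a double list sum
  have step1 : mulE (theta m D) (theta n D')
      = (L₁.map (fun σ => (L₂.map (fun τ => mulMPR' σ τ)).sum)).sum := by
    rw [mulE]
    show (theta m D).sum (fun σ c => (theta n D').sum fun τ d => (c * d) • mulMPR' σ τ) = _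
    rw [theta, sum_list_single]
    · congr 1
      apply List.map_congr_left
      intro σ _
      rw [theta, sum_list_single]
      · congr 1
        apply List.map_congr_left
        intro τ _
        simp
      · intro a; simp
      · intro a b₁ b₂; simp [mul_add, add_smul]
    · intro a
      rw [theta]
      simp [Finsupp.sum]
    · intro a b₁ b₂
      rw [Finsupp.sum, Finsupp.sum, Finsupp.sum, ← Finset.sum_add_distrib]
      apply Finset.sum_congr rfl
      intro τ _
      simp [add_mul, add_smul]
  -- Step 2: convert to Finset sums
  rw [step1, ← List.sum_toFinset _ hL₁nd]
  have step2 : ∀ σ ∈ L₁.toFinset, (L₂.map (fun τ => mulMPR' σ τ)).sum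
      = ∑ τ ∈ L₂.toFinset, mulMPR' σ τ := by
    intro σ _
    rw [← List.sum_toFinset _ hL₂nd]
  rw [Finset.sum_congr rfl step2]
  -- Step 3: rewrite mulMPR' as an indicator sum over P
  have hlen₁ : ∀ σ ∈ L₁.toFinset, σ.length = m := by
    intro σ hσ
    rw [List.mem_toFinset, hL₁, List.mem_filter] at hσ
    have := (List.mem_permutations.mp hσ.1).length_eq
    simpa using this
  have hlen₂ : ∀ τ ∈ L₂.toFinset, τ.length = n := by
    intro τ hτ
    rw [List.mem_toFinset, hL₂, List.mem_filter] at hτ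
    have := (List.mem_permutations.mp hτ.1).length_eq
    simpa using this
  have step3 : ∀ σ ∈ L₁.toFinset, ∀ τ ∈ L₂.toFinset, mulMPR' σ τ
      = ∑ w ∈ P.toFinset,
          if (stdz (w.take m) = σ ∧ stdz (w.drop m) = τ) then Finsupp.single w (1 : ℤ) else 0 := by
    intro σ hσ τ hτ
    rw [mulMPR', hlen₁ σ hσ, hlen₂ τ hτ]
    rw [list_filter_sum _ hPnd]
    apply Finset.sum_congr rfl
    intro w _
    simp only [decide_eq_true_eq]
  rw [Finset.sum_congr rfl (fun σ hσ => Finset.sum_congr rfl (step3 σ hσ))]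
  -- Step 4: swap sums and evaluate the inner double sum
  rw [sum_rotate]
  have step4 : ∀ w ∈ P.toFinset,
      (∑ τ ∈ L₂.toFinset, ∑ σ ∈ L₁.toFinset,
        if (stdz (w.take m) = σ ∧ stdz (w.drop m) = τ) then Finsupp.single w (1 : ℤ) else 0)
      = if (stdz (w.take m) ∈ L₁.toFinset ∧ stdz (w.drop m) ∈ L₂.toFinset)
          then Finsupp.single w (1 : ℤ) else 0 := by
    intro w _
    rw [Finset.sum_comm]
    exact double_ite _ _ _ _ _
  rw [Finset.sum_congr rfl step4]
  -- Step 5: rewrite the right-hand side as indicator sums over P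
  have rhs₁ : theta (m + n) D₁
      = ∑ w ∈ P.toFinset, if descSet w = D₁ then Finsupp.single w (1 : ℤ) else 0 := by
    rw [theta, list_filter_sum _ hPnd]
    apply Finset.sum_congr rfl
    intro w _
    simp only [decide_eq_true_eq]
  have rhs₂ : theta (m + n) D₂
      = ∑ w ∈ P.toFinset, if descSet w = D₂ then Finsupp.single w (1 : ℤ) else 0 := by
    rw [theta, list_filter_sum _ hPnd]
    apply Finset.sum_congr rfl
    intro w _
    simp only [decide_eq_true_eq]
  rw [rhs₁, rhs₂, ← Finset.sum_add_distrib]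
  -- Step 6: pointwise identification
  apply Finset.sum_congr rfl
  intro w hw
  have hwperm : w.Perm (List.range' 1 (m + n)) :=
    List.mem_permutations.mp (List.mem_toFinset.mp hw)
  have hwnd : w.Nodup := hwperm.nodup_iff.mpr (List.nodup_range')
  have hwlen : w.length = m + n := by simpa using hwperm.length_eq
  have htake_nd : (w.take m).Nodup := hwnd.sublist (List.take_sublist _ _)
  have hdrop_nd : (w.drop m).Nodup := hwnd.sublist (List.drop_sublist _ _)
  have htake_len : (w.take m).length = m := by rw [List.length_take]; omega
  have hdrop_len : (w.drop m).length = n := by rw [List.length_drop]; omega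
  have hcond : (stdz (w.take m) ∈ L₁.toFinset ∧ stdz (w.drop m) ∈ L₂.toFinset)
      ↔ (descSet w = D₁ ∨ descSet w = D₂) := by
    rw [← main_iff hwlen hm hn hD hD']
    have hp₁ : (stdz (w.take m)).Perm (List.range' 1 m) := by
      have := stdz_perm (w.take m) htake_nd
      rwa [htake_len] at this
    have hp₂ : (stdz (w.drop m)).Perm (List.range' 1 n) := by
      have := stdz_perm (w.drop m) hdrop_nd
      rwa [hdrop_len] at this
    rw [List.mem_toFinset, List.mem_toFinset, hL₁, hL₂, List.mem_filter, List.mem_filter,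
      descSet_stdz _ htake_nd, descSet_stdz _ hdrop_nd]
    constructor
    · rintro ⟨⟨_, h1⟩, ⟨_, h2⟩⟩
      exact ⟨by simpa using h1, by simpa using h2⟩
    · rintro ⟨h1, h2⟩
      exact ⟨⟨List.mem_permutations.mpr hp₁, by simpa using h1⟩,
        ⟨List.mem_permutations.mpr hp₂, by simpa using h2⟩⟩
  by_cases e1 : descSet w = D₁ <;> by_cases e2 : descSet w = D₂
  · exact absurd (e1.symm.trans e2) hD₁D₂
  · rw [if_pos (hcond.mpr (Or.inl e1)), if_pos e1, if_neg e2, add_zero]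
  · rw [if_pos (hcond.mpr (Or.inr e2)), if_neg e1, if_pos e2, zero_add]
  · rw [if_neg (fun h => (hcond.mp h).elim e1 e2), if_neg e1, if_neg e2, add_zero]
end
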